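/- Consider the 3×3 matrix B = [[-(γ+d+μ), ξ, 0],[β₁S₀+β₂V₀, -(ξ+μ), (α₁S₀+α₂V₀)/κ],[φ, 0, -ω]] with all parameters positive and the constant R_c = ξ[β₁S₀+β₂V₀+(φ/(κω))(α₁S₀+α₂V₀)]/((ξ+μ)(γ+d+μ)). Then det(B) < 0 if R_c < 1 and det(B) > 0 if R_c > 1. In particular, if R_c > 1 then B has a real eigenvalue with positive real part. -/

import Mathlib

open Matrix

lemma eval_charpoly_aux (M : Matrix (Fin 3) (Fin 3) ℝ) (x : ℝ) :
    M.charpoly.eval x = (x • (1 : Matrix (Fin 3) (Fin 3) ℝ) - M).det := by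
  rw [Matrix.charpoly, ← Polynomial.coe_evalRingHom, RingHom.map_det]
  congr 1
  ext i j
  simp [Matrix.charmatrix, Matrix.one_apply]
  by_cases h : i = j <;> simp [h, Matrix.one_apply]

theorem infected_block_det_sign (ξ μ γ d ω φ β₁ β₂ α₁ α₂ κ S₀ V₀ : ℝ)
    (hξ : 0 < ξ) (hμ : 0 < μ) (hγ : 0 < γ) (hd : 0 < d) (hω : 0 < ω)
    (hφ : 0 < φ) (hβ₁ : 0 < β₁) (hβ₂ : 0 < β₂) (hα₁ : 0 < α₁) (hα₂ : 0 < α₂)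
    (hκ : 0 < κ) (hS₀ : 0 < S₀) (hV₀ : 0 < V₀) :
    let B : Matrix (Fin 3) (Fin 3) ℝ :=
      !![-(γ + d + μ), ξ, 0;
        β₁ * S₀ + β₂ * V₀, -(ξ + μ), (α₁ * S₀ + α₂ * V₀) / κ;
        φ, 0, -ω]
    let Rc := ξ * (β₁ * S₀ + β₂ * V₀ + (φ / (κ * ω)) * (α₁ * S₀ + α₂ * V₀)) /
      ((ξ + μ) * (γ + d + μ))
    (Rc < 1 → B.det < 0) ∧ (1 < Rc → 0 < B.det) ∧
    (1 < Rc → ∃ lam : ℝ, 0 < lam ∧ B.charpoly.IsRoot lam) := by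
  intro B Rc
  have hκ0 : κ ≠ 0 := ne_of_gt hκ
  have hω0 : ω ≠ 0 := ne_of_gt hω
  have hprod : 0 < (ξ + μ) * (γ + d + μ) := by positivity
  have hdet : B.det = ω * ((ξ + μ) * (γ + d + μ)) * (Rc - 1) := by
    show (!![-(γ + d + μ), ξ, 0;
        β₁ * S₀ + β₂ * V₀, -(ξ + μ), (α₁ * S₀ + α₂ * V₀) / κ;
        φ, 0, -ω] : Matrix (Fin 3) (Fin 3) ℝ).det = _
    rw [Matrix.det_fin_three]
    show _ = ω * ((ξ + μ) * (γ + d + μ)) *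
      (ξ * (β₁ * S₀ + β₂ * V₀ + (φ / (κ * ω)) * (α₁ * S₀ + α₂ * V₀)) /
        ((ξ + μ) * (γ + d + μ)) - 1)
    simp [Matrix.vecHead, Matrix.vecTail]
    field_simp
    ring
  have hRc1 : ∀ h : 1 < Rc, 0 < B.det := by
    intro h
    rw [hdet]
    have : 0 < Rc - 1 := by linarith
    positivity
  refine ⟨?_, hRc1, ?_⟩
  · intro h
    rw [hdet]
    have h1 : Rc - 1 < 0 := by linarith
    have := mul_pos hω hprod
    nlinarith
  · intro h
    have hpos := hRc1 h
    -- eval at 0 is -det B < 0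
    have h0 : B.charpoly.eval 0 = -B.det := by
      rw [eval_charpoly_aux]
      simp [Matrix.det_neg]
      ring
    have hmono : B.charpoly.Monic := B.charpoly_monic
    have hdeg : B.charpoly.degree = 3 := by
      rw [Matrix.charpoly_degree_eq_dim]
      simp
    have htop : Filter.Tendsto (fun x => B.charpoly.eval x) Filter.atTop Filter.atTop := by
      apply Polynomial.tendsto_atTop_of_leadingCoeff_nonneg
      · rw [hdeg]; norm_num
      · rw [hmono.leadingCoeff]; norm_num
    obtain ⟨b, hb⟩ := (htop.eventually_ge_atTop 1).exists_forall_of_atTop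
    set c := max b 1 with hc
    have hcb : B.charpoly.eval c ≥ 1 := hb c (le_max_left _ _)
    have h0lt : B.charpoly.eval 0 < 0 := by rw [h0]; linarith
    have hcont : ContinuousOn (fun x => B.charpoly.eval x) (Set.Icc 0 c) :=
      (Polynomial.continuous _).continuousOn
    have hmem : (0 : ℝ) ∈ Set.Ioc (B.charpoly.eval 0) (B.charpoly.eval c) :=
      ⟨h0lt, by linarith⟩
    have h0c : (0 : ℝ) ≤ c := le_trans zero_le_one (le_max_right _ _)
    obtain ⟨lam, hlam, heval⟩ := intermediate_value_Ioc h0c hcont hmem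
    exact ⟨lam, hlam.1, heval⟩
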